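/- Let r, t, b ≥ 1 be integers with r even, let G_rs be a bipartite (r,t)-RS graph with parts identified with [n^rs], let Σ = (σ_{i,j}) ∈ (S_b)^{t×r}, let ℓ ∈ [t], and let E* = (e₁,…,e_{r/2}) be a tuple of r/2 distinct edges of the induced matching M_ℓ. Set m := (r/2)·b and define ρ ∈ S_m by ρ((i−1)·b + a) := (i−1)·b + σ_{ℓ,e_i}(a) for all i ∈ [r/2] and a ∈ [b], where σ_{ℓ,e_i} denotes the entry of Σ at row ℓ and the column indexing edge e_i in M_ℓ. Then the layered graph Block(G_rs, Σ, ℓ, E*) is a permutation graph for ρ. -/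
import Mathlib


/-- A layered graph: a DAG whose vertices are partitioned into layers `0,…,d-1`
(layer `i` has `size i` vertices, identified with `{0,…,size i − 1}`), and whose edges
`edge i u v` go from vertex `u` of layer `i` to vertex `v` of layer `i+1`. -/
structure LayeredGraph where
  d : ℕ
  size : ℕ → ℕ
  edge : ℕ → ℕ → ℕ → Prop

/-- One directed step: from vertex `(i, u)` to vertex `(i+1, v)` along an edge. -/
def LayeredGraph.step (G : LayeredGraph) (p q : ℕ × ℕ) : Prop :=
  q.1 = p.1 + 1 ∧ G.edge p.1 p.2 q.2

/-- Existence of a directed path. -/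
def LayeredGraph.Reach (G : LayeredGraph) : ℕ × ℕ → ℕ × ℕ → Prop :=
  Relation.ReflTransGen G.step

/-- `G` is a permutation graph for `σ ∈ S_m`. -/
def IsPermGraph (G : LayeredGraph) (m : ℕ) (σ : Equiv.Perm (Fin m)) : Prop :=
  0 < G.d ∧ m ≤ G.size 0 ∧ m ≤ G.size (G.d - 1) ∧
    ∀ i j : Fin m, (G.Reach (0, (i : ℕ)) (G.d - 1, (j : ℕ)) ↔ σ i = j)

/-- Concatenation `G₁ ∘ G₂`: `G₂` is traversed first, then `G₁`. -/
def LayeredGraph.concat (G₁ G₂ : LayeredGraph) : LayeredGraph where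
  d := G₂.d + G₁.d
  size := fun i => if i < G₂.d then G₂.size i else G₁.size (i - G₂.d)
  edge := fun i u v =>
    G₂.edge i u v ∨
    (i + 1 = G₂.d ∧ u = v ∧ u < min (G₂.size (G₂.d - 1)) (G₁.size 0)) ∨
    (G₂.d ≤ i ∧ G₁.edge (i - G₂.d) u v)

/-- A bipartite `(r,t)`-Ruzsa–Szemerédi graph on parts `L_rs = R_rs = [nrs]`: its edge
set is partitioned into `t` induced matchings, each of size `r`; edge `j` of matching
`i` has endpoints `Ledge i j ∈ L_rs` and `Redge i j ∈ R_rs`. -/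
structure RSGraph (nrs r t : ℕ) where
  Ledge : Fin t → Fin r → Fin nrs
  Redge : Fin t → Fin r → Fin nrs
  /-- Each `M_i` is a matching on the left. -/
  matchL : ∀ i : Fin t, Function.Injective (Ledge i)
  /-- Each `M_i` is a matching on the right. -/
  matchR : ∀ i : Fin t, Function.Injective (Redge i)
  /-- The matchings partition the edge set (edges are pairwise distinct). -/
  edgePartition : ∀ i i' j j', Ledge i j = Ledge i' j' → Redge i j = Redge i' j' →
    i = i' ∧ j = j'
  /-- Each matching is induced: any edge of the graph joining a left endpoint and a
  right endpoint of matching `i` belongs to matching `i`. -/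
  induced : ∀ i i' j' j₁ j₂, Ledge i' j' = Ledge i j₁ → Redge i' j' = Redge i j₂ → i' = i

/-- A 2-layer graph on `n` vertices per layer, with edge relation `E`. -/
def twoLayer (n : ℕ) (E : ℕ → ℕ → Prop) : LayeredGraph where
  d := 2
  size := fun _ => n
  edge := fun i u v => i = 0 ∧ u < n ∧ v < n ∧ E u v

/-- The group permuting graph `PermGroups(σ, b)`: a 2-layer group-layered graph of
width `w` and group size `b` whose edges send `(a, j) ↦ (σ a, j)` (vertex `(a, j)` is
identified with `a·b + j`). -/
def PermGroups {w : ℕ} (σ : Equiv.Perm (Fin w)) (b : ℕ) : LayeredGraph :=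
  twoLayer (w * b) (fun u v => ∃ (a : Fin w) (j : Fin b),
    u = (a : ℕ) * b + (j : ℕ) ∧ v = ((σ a : Fin w) : ℕ) * b + (j : ℕ))

/-- The encoded RS-graph `Encoded-RS(G_rs, Σ)`: for every `i ∈ [t]`, `j ∈ [r]`, the edge
`e` = edge `j` of matching `i` contributes the `b` edges
`(L(e), a) ↦ (R(e), σ_{i,j}(a))`. -/
def EncodedRS (nrs r t b : ℕ) (G : RSGraph nrs r t)
    (Sg : Fin t → Fin r → Equiv.Perm (Fin b)) : LayeredGraph :=
  twoLayer (nrs * b) (fun u v => ∃ (i : Fin t) (j : Fin r) (a : Fin b),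
    u = ((G.Ledge i j) : ℕ) * b + (a : ℕ) ∧
    v = ((G.Redge i j) : ℕ) * b + (((Sg i j) a : Fin b) : ℕ))

/-- `Block(G_rs, Σ, ℓ, E*) = PermGroups(σ_R, b) ∘ Encoded-RS(G_rs, Σ) ∘ PermGroups(σ_L, b)`,
where `σ_L, σ_R` are the edge picking permutations (any permutations extending the
partial maps `i ↦ L(e_i)` and `R(e_i) ↦ i`). -/
def Block (nrs r t b : ℕ) (G : RSGraph nrs r t) (Sg : Fin t → Fin r → Equiv.Perm (Fin b))
    (σL σR : Equiv.Perm (Fin nrs)) : LayeredGraph :=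
  LayeredGraph.concat (PermGroups σR b)
    (LayeredGraph.concat (EncodedRS nrs r t b G Sg) (PermGroups σL b))

private lemma reach_fst_le (G : LayeredGraph) {p q : ℕ × ℕ} (h : G.Reach p q) :
    p.1 ≤ q.1 := by
  induction h with
  | refl => exact le_rfl
  | tail _ hstep ih => have := hstep.1; omega

private lemma reach_self_eq (G : LayeredGraph) {p q : ℕ × ℕ} (h : G.Reach p q)
    (hq : q.1 = p.1) : p = q := by
  cases h.cases_head with
  | inl h => exact h
  | inr h =>
    obtain ⟨z, hstep, hr⟩ := h
    have h1 := reach_fst_le G hr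
    have h2 := hstep.1
    omega

private lemma decomp_unique {b a1 a2 j1 j2 : ℕ} (hb : 0 < b) (hj1 : j1 < b) (hj2 : j2 < b)
    (h : a1 * b + j1 = a2 * b + j2) : a1 = a2 ∧ j1 = j2 := by
  have h1 : (a1 * b + j1) / b = a1 := by
    rw [add_comm, Nat.add_mul_div_right _ _ hb, Nat.div_eq_of_lt hj1, Nat.zero_add]
  have h2 : (a2 * b + j2) / b = a2 := by
    rw [add_comm, Nat.add_mul_div_right _ _ hb, Nat.div_eq_of_lt hj2, Nat.zero_add]
  have ha : a1 = a2 := by rw [← h1, ← h2, h]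
  subst ha
  exact ⟨rfl, by omega⟩

/-- With `r = 2·r2` even, `ℓ ∈ [t]`, `E* = (e₁,…,e_{r/2})` a tuple of
distinct edges of the induced matching `M_ℓ`, `(σ_L, σ_R)` the edge picking permutations
(extending `i ↦ L(e_i)` and `R(e_i) ↦ i`), and `ρ ∈ S_m` (`m = (r/2)·b`) defined by
`ρ(i·b + a) = i·b + σ_{ℓ,e_i}(a)`, the layered graph `Block(G_rs, Σ, ℓ, E*)` is a
permutation graph for `ρ`. -/

theorem stmt12 (nrs r2 t b : ℕ) (hb : 1 ≤ b) (ht : 1 ≤ t) (hr : 1 ≤ r2) (hrn : r2 ≤ nrs)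
    (G : RSGraph nrs (2 * r2) t) (Sg : Fin t → Fin (2 * r2) → Equiv.Perm (Fin b))
    (ℓ : Fin t) (Estar : Fin r2 → Fin (2 * r2)) (hE : Function.Injective Estar)
    (σL σR : Equiv.Perm (Fin nrs))
    (hσL : ∀ i : Fin r2, σL (Fin.castLE hrn i) = G.Ledge ℓ (Estar i))
    (hσR : ∀ i : Fin r2, σR (G.Redge ℓ (Estar i)) = Fin.castLE hrn i)
    (ρ : Equiv.Perm (Fin (r2 * b)))
    (hρ : ∀ (i : Fin r2) (a : Fin b) (x y : Fin (r2 * b)),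
      (x : ℕ) = (i : ℕ) * b + (a : ℕ) →
      (y : ℕ) = (i : ℕ) * b + (((Sg ℓ (Estar i)) a : Fin b) : ℕ) →
      ρ x = y) :
    IsPermGraph (Block nrs (2 * r2) t b G Sg σL σR) (r2 * b) ρ := by
  have hb0 : 0 < b := hb
  set B := Block nrs (2 * r2) t b G Sg σL σR with hB
  have hmn : r2 * b ≤ nrs * b := Nat.mul_le_mul hrn (le_refl b)
  have hd : B.d = 6 := rfl
  have hs0 : B.size 0 = nrs * b := rfl
  have hs5 : B.size (B.d - 1) = nrs * b := rfl
  refine ⟨by omega, by rw [hs0]; exact hmn, by rw [hs5]; exact hmn, ?_⟩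
  have hd5 : B.d - 1 = 5 := rfl
  rw [hd5]
  intro x y
  constructor
  · -- forward
    intro hreach
    rcases hreach.cases_head with heq | ⟨⟨l1, v1⟩, ⟨hl1, he1⟩, hreach⟩
    · simp [Prod.ext_iff] at heq
    subst hl1
    rcases hreach.cases_head with heq | ⟨⟨l2, v2⟩, ⟨hl2, he2⟩, hreach⟩
    · simp [Prod.ext_iff] at heq
    subst hl2
    rcases hreach.cases_head with heq | ⟨⟨l3, v3⟩, ⟨hl3, he3⟩, hreach⟩
    · simp [Prod.ext_iff] at heq
    subst hl3
    rcases hreach.cases_head with heq | ⟨⟨l4, v4⟩, ⟨hl4, he4⟩, hreach⟩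
    · simp [Prod.ext_iff] at heq
    subst hl4
    rcases hreach.cases_head with heq | ⟨⟨l5, v5⟩, ⟨hl5, he5⟩, hreach⟩
    · simp [Prod.ext_iff] at heq
    subst hl5
    have hv5y : v5 = (y : ℕ) := by
      have := reach_self_eq B hreach (by norm_num)
      exact (congrArg Prod.snd this)
    -- unfold the five edges
    simp only [hB, Block, LayeredGraph.concat, twoLayer, PermGroups, EncodedRS] at he1 he2 he3 he4 he5
    norm_num at he1 he2 he3 he4 he5
    obtain ⟨hu1, hv1lt, a0, j0, hx, hv1⟩ := he1
    obtain ⟨hv2, hv2lt⟩ := he2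
    obtain ⟨hu3, hv3lt, i', j', a', hu2, hv3⟩ := he3
    obtain ⟨hv4, hv4lt⟩ := he4
    obtain ⟨hu5, hv5lt, a4, j4, hu4, hv5⟩ := he5
    -- a0 < r2
    have ha0lt : (a0 : ℕ) < r2 := by
      have hxlt : (x : ℕ) < r2 * b := x.isLt
      have : (a0 : ℕ) * b < r2 * b := by omega
      exact Nat.lt_of_mul_lt_mul_right this
    set i0 : Fin r2 := ⟨(a0 : ℕ), ha0lt⟩ with hi0
    have hc0 : Fin.castLE hrn i0 = a0 := Fin.ext rfl
    rw [← hc0, hσL i0] at hv1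
    -- layer 2 decomposition
    rw [← hv2, hv1] at hu2
    obtain ⟨hLeq, haj⟩ := decomp_unique hb0 j0.isLt a'.isLt hu2
    have hL : G.Ledge i' j' = G.Ledge ℓ (Estar i0) := Fin.ext hLeq.symm
    have ha' : a' = j0 := Fin.ext haj.symm
    -- layer 4 decomposition
    rw [← hv4, hv3] at hu4
    obtain ⟨hReq, hjj⟩ := decomp_unique hb0 (Sg i' j' a').isLt j4.isLt hu4
    have hR4 : a4 = G.Redge i' j' := Fin.ext hReq.symm
    -- y decomposition
    rw [hv5y, hR4] at hv5
    have hklt : ((σR (G.Redge i' j') : Fin nrs) : ℕ) < r2 := by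
      have hylt : (y : ℕ) < r2 * b := y.isLt
      have : ((σR (G.Redge i' j') : Fin nrs) : ℕ) * b < r2 * b := by omega
      exact Nat.lt_of_mul_lt_mul_right this
    set k : Fin r2 := ⟨_, hklt⟩ with hk
    have hck : Fin.castLE hrn k = σR (G.Redge i' j') := Fin.ext rfl
    have hRk : G.Redge ℓ (Estar k) = G.Redge i' j' := σR.injective (by rw [hσR k, hck])
    have hiℓ : i' = ℓ := G.induced ℓ i' j' (Estar i0) (Estar k) hL hRk.symm
    subst hiℓ
    have hj' : j' = Estar i0 := G.matchL i' hL
    have hki0 : k = i0 := by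
      apply hE
      apply G.matchR i'
      rw [hRk, hj']
    refine hρ i0 j0 x y ?_ ?_
    · exact hx
    · rw [hv5]
      have hcoe : ((σR (G.Redge i' j') : Fin nrs) : ℕ) = (i0 : ℕ) := by
        rw [show ((σR (G.Redge i' j') : Fin nrs) : ℕ) = (k : ℕ) from rfl, hki0]
      rw [hcoe, ← hjj, hj', ha']
  · -- backward
    intro hxy
    have hdiv : (x : ℕ) / b < r2 := (Nat.div_lt_iff_lt_mul hb0).mpr x.isLt
    set i0 : Fin r2 := ⟨(x : ℕ) / b, hdiv⟩ with hi0
    set a0 : Fin b := ⟨(x : ℕ) % b, Nat.mod_lt _ hb0⟩ with ha0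
    have hx : (x : ℕ) = (i0 : ℕ) * b + (a0 : ℕ) := by
      show (x : ℕ) = (x : ℕ) / b * b + (x : ℕ) % b
      exact (Nat.div_add_mod' _ _).symm
    have hlt : (i0 : ℕ) * b + ((Sg ℓ (Estar i0) a0 : Fin b) : ℕ) < r2 * b := by
      have h1 := (Sg ℓ (Estar i0) a0).isLt
      have h2 : ((i0 : ℕ) + 1) * b ≤ r2 * b := Nat.mul_le_mul i0.isLt (le_refl b)
      rw [add_mul, one_mul] at h2
      omega
    have hy : (y : ℕ) = (i0 : ℕ) * b + ((Sg ℓ (Estar i0) a0 : Fin b) : ℕ) := by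
      have := hρ i0 a0 x ⟨_, hlt⟩ hx rfl
      rw [hxy] at this
      exact congrArg Fin.val this
    have hxlt : (x : ℕ) < nrs * b := lt_of_lt_of_le x.isLt hmn
    have hLlt : ((G.Ledge ℓ (Estar i0)) : ℕ) * b + (a0 : ℕ) < nrs * b := by
      have h1 := a0.isLt
      have h2 : (((G.Ledge ℓ (Estar i0)) : ℕ) + 1) * b ≤ nrs * b :=
        Nat.mul_le_mul (G.Ledge ℓ (Estar i0)).isLt (le_refl b)
      rw [add_mul, one_mul] at h2
      omega
    have hRlt : ((G.Redge ℓ (Estar i0)) : ℕ) * b + ((Sg ℓ (Estar i0) a0 : Fin b) : ℕ) < nrs * b := by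
      have h1 := (Sg ℓ (Estar i0) a0).isLt
      have h2 : (((G.Redge ℓ (Estar i0)) : ℕ) + 1) * b ≤ nrs * b :=
        Nat.mul_le_mul (G.Redge ℓ (Estar i0)).isLt (le_refl b)
      rw [add_mul, one_mul] at h2
      omega
    have hylt : (y : ℕ) < nrs * b := lt_of_lt_of_le y.isLt hmn
    refine Relation.ReflTransGen.head
      (b := (1, ((G.Ledge ℓ (Estar i0)) : ℕ) * b + (a0 : ℕ))) ⟨rfl, ?_⟩
      (Relation.ReflTransGen.head
        (b := (2, ((G.Ledge ℓ (Estar i0)) : ℕ) * b + (a0 : ℕ))) ⟨rfl, ?_⟩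
        (Relation.ReflTransGen.head
          (b := (3, ((G.Redge ℓ (Estar i0)) : ℕ) * b + ((Sg ℓ (Estar i0) a0 : Fin b) : ℕ))) ⟨rfl, ?_⟩
          (Relation.ReflTransGen.head
            (b := (4, ((G.Redge ℓ (Estar i0)) : ℕ) * b + ((Sg ℓ (Estar i0) a0 : Fin b) : ℕ))) ⟨rfl, ?_⟩
            (Relation.ReflTransGen.single ⟨rfl, ?_⟩))))
    · simp only [hB, Block, LayeredGraph.concat, twoLayer, PermGroups, EncodedRS]
      norm_num
      refine ⟨hxlt, hLlt, Fin.castLE hrn i0, a0, ?_, ?_⟩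
      · exact hx
      · rw [hσL i0]
    · simp only [hB, Block, LayeredGraph.concat, twoLayer, PermGroups, EncodedRS]
      norm_num
      exact hLlt
    · simp only [hB, Block, LayeredGraph.concat, twoLayer, PermGroups, EncodedRS]
      norm_num
      exact ⟨hLlt, hRlt, ℓ, Estar i0, a0, rfl, rfl⟩
    · simp only [hB, Block, LayeredGraph.concat, twoLayer, PermGroups, EncodedRS]
      norm_num
      exact hRlt
    · simp only [hB, Block, LayeredGraph.concat, twoLayer, PermGroups, EncodedRS]
      norm_num
      refine ⟨hRlt, hylt, G.Redge ℓ (Estar i0), Sg ℓ (Estar i0) a0, rfl, ?_⟩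
      rw [hσR i0, hy]; rfl
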